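/- Let B ∈ ℝ³ be a unit vector, let ε > 0 and let v : ℝ → ℝ³ be differentiable with v'(t) = (1/ε) (v(t) × B) for all t. Then the filtered variable y(t) = cos(t/ε) v(t) + (1 − cos(t/ε)) ⟨B, v(t)⟩ B − sin(t/ε) (v(t) × B) is constant in t: y(t) = v(0) for all t ∈ ℝ. (The filter (3.8) exactly removes the oscillation generated by the stiff Lorentz term when B is constant.) -/

import Mathlib

open RealInnerProductSpace

/-- Three-dimensional cross product on `EuclideanSpace ℝ (Fin 3)`. -/
noncomputable def cross3 (u v : EuclideanSpace ℝ (Fin 3)) : EuclideanSpace ℝ (Fin 3) :=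
  WithLp.toLp 2 (crossProduct (fun i => u i) (fun i => v i))

lemma cross3_apply (u v : EuclideanSpace ℝ (Fin 3)) :
    cross3 u v = ![u 1 * v 2 - u 2 * v 1, u 2 * v 0 - u 0 * v 2, u 0 * v 1 - u 1 * v 0] := by
  simp [cross3, cross_apply]

lemma inner3 (u v : EuclideanSpace ℝ (Fin 3)) : ⟪u, v⟫ = u 0 * v 0 + u 1 * v 1 + u 2 * v 2 := by
  simp [PiLp.inner_apply, Fin.sum_univ_three]; ring

noncomputable def crossR (B : EuclideanSpace ℝ (Fin 3)) :
    EuclideanSpace ℝ (Fin 3) →L[ℝ] EuclideanSpace ℝ (Fin 3) :=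
  LinearMap.toContinuousLinearMap
    { toFun := fun u => cross3 u B
      map_add' := by
        intro u w; ext i
        fin_cases i <;> simp [cross3_apply, PiLp.add_apply] <;> ring
      map_smul' := by
        intro c u; ext i
        fin_cases i <;> simp [cross3_apply, PiLp.smul_apply, smul_eq_mul] <;> ring }

lemma crossR_apply (B u : EuclideanSpace ℝ (Fin 3)) : crossR B u = cross3 u B := rfl

lemma cross3_cross (B u : EuclideanSpace ℝ (Fin 3)) :
    cross3 (cross3 u B) B = ⟪B, u⟫ • B - ⟪B, B⟫ • u := by
  ext i
  rw [inner3 B B]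
  fin_cases i <;>
    simp [cross3_apply, inner3, PiLp.inner_apply, Fin.sum_univ_three, PiLp.sub_apply,
      PiLp.smul_apply, smul_eq_mul] <;> ring

lemma inner_cross (B u : EuclideanSpace ℝ (Fin 3)) : ⟪B, cross3 u B⟫ = 0 := by
  rw [inner3, cross3_apply]; simp; ring

/-- The filter (3.8) exactly removes the oscillation generated by the stiff Lorentz
term when `B` is a constant unit vector: if `v' = (1/ε) v × B` then the filtered
variable `y(t)` is constantly equal to `v(0)`. -/
theorem filter_removes_oscillation
    (B : EuclideanSpace ℝ (Fin 3)) (hB : ‖B‖ = 1)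
    (ε : ℝ) (hε : 0 < ε)
    (v : ℝ → EuclideanSpace ℝ (Fin 3))
    (hv : ∀ t : ℝ, HasDerivAt v ((1 / ε) • cross3 (v t) B) t) :
    ∀ t : ℝ,
      Real.cos (t / ε) • v t + (1 - Real.cos (t / ε)) • (⟪B, v t⟫ • B)
        - Real.sin (t / ε) • cross3 (v t) B = v 0 := by
  have hBB : ⟪B, B⟫ = (1 : ℝ) := by
    rw [real_inner_self_eq_norm_sq, hB]; norm_num
  set y : ℝ → EuclideanSpace ℝ (Fin 3) := fun t =>
    Real.cos (t / ε) • v t + (1 - Real.cos (t / ε)) • (⟪B, v t⟫ • B)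
      - Real.sin (t / ε) • cross3 (v t) B with hy
  have hder : ∀ t : ℝ, HasDerivAt y 0 t := by
    intro t
    have hdiv : HasDerivAt (fun s : ℝ => s / ε) (1 / ε) t := by
      simpa using (hasDerivAt_id t).div_const ε
    have hcos : HasDerivAt (fun s : ℝ => Real.cos (s / ε))
        (-Real.sin (t / ε) * (1 / ε)) t :=
      by have := (Real.hasDerivAt_cos (t / ε)).comp t hdiv; exact this
    have hsin : HasDerivAt (fun s : ℝ => Real.sin (s / ε))
        (Real.cos (t / ε) * (1 / ε)) t :=
      by have := (Real.hasDerivAt_sin (t / ε)).comp t hdiv; exact this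
    have hone := (hasDerivAt_const t (1:ℝ)).sub hcos
    have hinner : HasDerivAt (fun s : ℝ => ⟪B, v s⟫)
        (⟪B, (1 / ε) • cross3 (v t) B⟫ + ⟪(0 : EuclideanSpace ℝ (Fin 3)), v t⟫) t :=
      (hasDerivAt_const t B).inner ℝ (hv t)
    have hinner' : HasDerivAt (fun s : ℝ => ⟪B, v s⟫) 0 t := by
      convert hinner using 1
      rw [inner_zero_left, add_zero, real_inner_smul_right, inner_cross, mul_zero]
    have hcrossv : HasDerivAt (fun s : ℝ => cross3 (v s) B)
        ((1 / ε) • cross3 (cross3 (v t) B) B) t := by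
      have := (crossR B).hasFDerivAt.comp_hasDerivAt t (hv t)
      rw [ContinuousLinearMap.map_smul, crossR_apply] at this; exact this
    have h1 := hcos.smul (hv t)
    have h2 := hone.smul (hinner'.smul (hasDerivAt_const t B))
    have h3 := hsin.smul hcrossv
    have hD := (h1.add h2).sub h3
    refine hD.congr_deriv ?_
    rw [cross3_cross, hBB]
    simp only [smul_zero, zero_add, zero_smul, add_zero, smul_sub, smul_smul, one_smul]
    simp only [Pi.smul_apply']
    module
  intro t
  have h1 : y t = y 0 := is_const_of_deriv_eq_zero (f := y)
    (fun s => (hder s).differentiableAt) (fun s => (hder s).deriv) t 0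
  have h0 : y 0 = v 0 := by simp [hy]
  exact h1.trans h0
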